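/- Let σ be a positive semidefinite matrix and let B be a nonempty, compact, convex set of positive semidefinite matrices with trace ≤ 1. Regarding the (nonnegative real) traces as elements of the extended nonnegative reals [0,∞], one has inf over ρ̃ ∈ B of ( sup { tr(M·ρ̃) : M positive semidefinite with tr(Mσ) ≤ 1 } ) = sup over M positive semidefinite with tr(Mσ) ≤ 1 of ( inf over ρ̃ ∈ B of tr(M·ρ̃) ), i.e. the infimum over B and the supremum over M can be interchanged. -/

import Mathlib

open scoped Classical ComplexOrder Kronecker
open Matrix

noncomputable section

variable {n : Type*} [Fintype n] [DecidableEq n]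

/-- Real part of the trace. -/
def rtr (A : Matrix n n ℂ) : ℝ := (A.trace).re

/-- Löwner order: `loewnerLE A B` iff `B - A` is positive semidefinite. -/
def loewnerLE (A B : Matrix n n ℂ) : Prop := (B - A).PosSemidef

/-- Positive semidefinite square root of a PSD matrix (junk value `0` otherwise). -/
def msqrt (A : Matrix n n ℂ) : Matrix n n ℂ :=
  if h : A.PosSemidef then
    (h.1.eigenvectorUnitary : Matrix n n ℂ) *
      Matrix.diagonal (fun i => ((Real.sqrt (h.1.eigenvalues i) : ℝ) : ℂ)) *
      (star (h.1.eigenvectorUnitary : Matrix n n ℂ))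
  else 0

/-- Trace norm `‖A‖₁ = tr √(Aᴴ A)`. -/
def traceNorm (A : Matrix n n ℂ) : ℝ :=
  rtr (((Matrix.posSemidef_conjTranspose_mul_self A).1.eigenvectorUnitary : Matrix n n ℂ) *
      Matrix.diagonal (fun i => ((Real.sqrt
        ((Matrix.posSemidef_conjTranspose_mul_self A).1.eigenvalues i) : ℝ) : ℂ)) *
      (star ((Matrix.posSemidef_conjTranspose_mul_self A).1.eigenvectorUnitary : Matrix n n ℂ)))

/-- Generalized fidelity for sub-normalized states. -/
def genFid (ρ σ : Matrix n n ℂ) : ℝ :=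
  (traceNorm (msqrt ρ * msqrt σ) + Real.sqrt ((1 - rtr ρ) * (1 - rtr σ))) ^ 2

/-- Purified distance. -/
def purDist (ρ σ : Matrix n n ℂ) : ℝ := Real.sqrt (1 - genFid ρ σ)

/-- Trace distance. -/
def traceDist (ρ σ : Matrix n n ℂ) : ℝ := traceNorm (ρ - σ) / 2

/-- Max-divergence `D_max(ρ‖σ) = inf {λ : ρ ≤ 2^λ σ}` (Löwner order). -/
def Dmax (ρ σ : Matrix n n ℂ) : ℝ :=
  sInf {lam : ℝ | loewnerLE ρ (((2 : ℝ) ^ lam) • σ)}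

/-- Smoothed max-divergence with purified-distance smoothing over sub-normalized states. -/
def DmaxSmoothP (ε : ℝ) (ρ σ : Matrix n n ℂ) : ℝ :=
  sInf {d : ℝ | ∃ ρ' : Matrix n n ℂ,
    ρ'.PosSemidef ∧ rtr ρ' ≤ 1 ∧ purDist ρ ρ' ≤ ε ∧ d = Dmax ρ' σ}

/-- Hypothesis testing divergence
`D_h^ε(ρ‖σ) = -log sup {tr (Λ σ) : 0 ≤ Λ ≤ 1, tr (Λ ρ) ≥ 1 - ε}`. -/
def Dh (ε : ℝ) (ρ σ : Matrix n n ℂ) : ℝ :=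
  - Real.logb 2 (sSup {x : ℝ | ∃ L : Matrix n n ℂ,
      L.PosSemidef ∧ loewnerLE L 1 ∧ 1 - ε ≤ rtr (L * ρ) ∧ x = rtr (L * σ)})

/-- Real power of a Hermitian matrix, defined spectrally (junk value `0` if not Hermitian). -/
def hpow (A : Matrix n n ℂ) (t : ℝ) : Matrix n n ℂ :=
  if h : A.IsHermitian then
    (h.eigenvectorUnitary : Matrix n n ℂ) *
      Matrix.diagonal (fun i => ((h.eigenvalues i ^ t : ℝ) : ℂ)) *
      (star (h.eigenvectorUnitary : Matrix n n ℂ))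
  else 0

/-- Sandwiched Rényi divergence of order `α`. -/
def sandwichedRenyi (α : ℝ) (ρ σ : Matrix n n ℂ) : ℝ :=
  (1 / (α - 1)) * Real.logb 2
    (rtr (hpow (hpow σ ((1 - α) / (2 * α)) * ρ * hpow σ ((1 - α) / (2 * α))) α) / rtr ρ)

/-- Marginal (partial trace) on the first factor. -/
def margA {A B : Type*} [Fintype A] [Fintype B] (ρ : Matrix (A × B) (A × B) ℂ) :
    Matrix A A ℂ :=
  Matrix.of fun a a' => ∑ b : B, ρ (a, b) (a', b)

/-- Marginal (partial trace) on the second factor. -/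
def margB {A B : Type*} [Fintype A] [Fintype B] (ρ : Matrix (A × B) (A × B) ℂ) :
    Matrix B B ℂ :=
  Matrix.of fun b b' => ∑ a : A, ρ (a, b) (a, b')

end


section MinimaxAux

open Matrix

variable {n : Type*} [Fintype n] [DecidableEq n]

private lemma rtr_add' (A B : Matrix n n ℂ) : rtr (A + B) = rtr A + rtr B := by
  simp [rtr, Matrix.trace_add]

private lemma rtr_real_smul (r : ℝ) (A : Matrix n n ℂ) : rtr (r • A) = r * rtr A := by
  simp [rtr, Matrix.trace_smul, Complex.smul_re]

private lemma rtr_sum {ι : Type*} (s : Finset ι) (f : ι → Matrix n n ℂ) :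
    rtr (∑ i ∈ s, f i) = ∑ i ∈ s, rtr (f i) := by
  simp [rtr, Matrix.trace_sum, Complex.re_sum]

private lemma continuous_rtr_mul (M : Matrix n n ℂ) :
    Continuous fun ρ : Matrix n n ℂ => rtr (M * ρ) :=
  Complex.continuous_re.comp ((continuous_const.matrix_mul continuous_id).matrix_trace)

private lemma posSemidef_real_smul {A : Matrix n n ℂ} (hA : A.PosSemidef) {r : ℝ}
    (hr : 0 ≤ r) : (r • A).PosSemidef := by
  have h : (r • A) = ((r : ℂ) • A) := by
    ext i j
    simp [Complex.real_smul]
  rw [h]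
  refine Matrix.PosSemidef.of_dotProduct_mulVec_nonneg ?_ fun x => ?_
  · unfold Matrix.IsHermitian
    rw [Matrix.conjTranspose_smul, hA.1.eq]
    simp
  · rw [Matrix.smul_mulVec, dotProduct_smul, smul_eq_mul]
    exact mul_nonneg (by exact_mod_cast Complex.zero_le_real.mpr hr) (hA.dotProduct_mulVec_nonneg x)

/-- Key finite-dimensional minimax separation step. -/
private lemma exists_uniform_M
    (σ : Matrix n n ℂ)
    (B : Set (Matrix n n ℂ)) (hne : B.Nonempty) (hcomp : IsCompact B) (hconv : Convex ℝ B)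
    (c : ℝ)
    (h : ∀ ρ ∈ B, ∃ M : Matrix n n ℂ, (M.PosSemidef ∧ rtr (M * σ) ≤ 1) ∧ c < rtr (M * ρ)) :
    ∃ M : Matrix n n ℂ, (M.PosSemidef ∧ rtr (M * σ) ≤ 1) ∧ ∀ ρ ∈ B, c < rtr (M * ρ) := by
  classical
  set ι : Type _ := {M : Matrix n n ℂ // M.PosSemidef ∧ rtr (M * σ) ≤ 1} with hι
  set U : ι → Set (Matrix n n ℂ) := fun M => {ρ | c < rtr (M.1 * ρ)} with hU
  have hUopen : ∀ M : ι, IsOpen (U M) := fun M =>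
    isOpen_lt continuous_const (continuous_rtr_mul M.1)
  have hcover : B ⊆ ⋃ M : ι, U M := by
    intro ρ hρ
    obtain ⟨M, hM1, hM2⟩ := h ρ hρ
    exact Set.mem_iUnion.mpr ⟨⟨M, hM1⟩, hM2⟩
  obtain ⟨t, ht⟩ := hcomp.elim_finite_subcover U hUopen hcover
  -- Linear map to Euclidean space recording the tested traces
  let T0 : Matrix n n ℂ →ₗ[ℝ] ({M : ι // M ∈ t} → ℝ) :=
    { toFun := fun ρ i => rtr (i.1.1 * ρ)
      map_add' := fun ρ₁ ρ₂ => funext fun i => by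
        simp only [mul_add, rtr_add', Pi.add_apply]
      map_smul' := fun s ρ => funext fun i => by
        simp only [Matrix.mul_smul, rtr_real_smul, RingHom.id_apply, Pi.smul_apply,
          smul_eq_mul] }
  let T : Matrix n n ℂ →ₗ[ℝ] EuclideanSpace ℝ {M : ι // M ∈ t} :=
    (WithLp.linearEquiv 2 ℝ _).symm.toLinearMap ∘ₗ T0
  have hTapp : ∀ (ρ : Matrix n n ℂ) (i : {M : ι // M ∈ t}), T ρ i = rtr (i.1.1 * ρ) :=
    fun ρ i => rfl
  have hTcont : Continuous T := by
    have h0 : Continuous fun ρ => T0 ρ := continuous_pi fun i => continuous_rtr_mul _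
    exact (PiLp.continuous_toLp 2 _).comp h0
  set C : Set (EuclideanSpace ℝ {M : ι // M ∈ t}) := T '' B with hCdef
  set D : Set (EuclideanSpace ℝ {M : ι // M ∈ t}) := {x | ∀ i, x i ≤ c} with hDdef
  have hCconv : Convex ℝ C := hconv.linear_image T
  have hCcomp : IsCompact C := hcomp.image hTcont
  have hDconv : Convex ℝ D := by
    intro x hx y hy a b ha hb hab i
    have hxy : (a • x + b • y) i = a * x i + b * y i := rfl
    rw [Set.mem_setOf_eq] at hx hy
    calc (a • x + b • y) i = a * x i + b * y i := rfl
      _ ≤ a * c + b * c :=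
        add_le_add (mul_le_mul_of_nonneg_left (hx i) ha) (mul_le_mul_of_nonneg_left (hy i) hb)
      _ = c := by rw [← add_mul, hab, one_mul]
  have hDclosed : IsClosed D := by
    have hD2 : D = ⋂ i, {x : EuclideanSpace ℝ {M : ι // M ∈ t} | x i ≤ c} := by
      ext x; simp [hDdef]
    rw [hD2]
    refine isClosed_iInter fun i => isClosed_le ?_ continuous_const
    exact (continuous_apply i).comp (PiLp.continuous_ofLp 2 _)
  have hdisj : Disjoint C D := by
    rw [Set.disjoint_left]
    rintro x ⟨ρ, hρB, rfl⟩ hxD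
    obtain ⟨M, hMt, hMU⟩ := Set.mem_iUnion₂.mp (ht hρB)
    have h1 : c < rtr (M.1 * ρ) := hMU
    have h2 : rtr (M.1 * ρ) ≤ c := hxD ⟨M, hMt⟩
    linarith
  obtain ⟨f, u, v, hfu, huv, hfv⟩ :=
    geometric_hahn_banach_compact_closed hCconv hCcomp hDconv hDclosed hdisj
  set e : {M : ι // M ∈ t} → EuclideanSpace ℝ {M : ι // M ∈ t} :=
    fun i => EuclideanSpace.single i (1 : ℝ) with he
  have hdecomp : ∀ x : EuclideanSpace ℝ {M : ι // M ∈ t}, f x = ∑ i, x i * f (e i) := by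
    intro x
    have hx := (EuclideanSpace.basisFun {M : ι // M ∈ t} ℝ).sum_repr x
    conv_lhs => rw [← hx]
    rw [map_sum]
    refine Finset.sum_congr rfl fun i _ => ?_
    rw [_root_.map_smul, EuclideanSpace.basisFun_repr, EuclideanSpace.basisFun_apply, smul_eq_mul]
  set lam : {M : ι // M ∈ t} → ℝ := fun i => -f (e i) with hlam
  have hfe : ∀ i, f (e i) = -lam i := fun i => by simp [hlam]
  let cc : EuclideanSpace ℝ {M : ι // M ∈ t} := WithLp.toLp 2 (fun _ => c)
  have hccD : cc ∈ D := fun i => le_rfl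
  have hfcc : v < f cc := hfv _ hccD
  have hlam_nonneg : ∀ i, 0 ≤ lam i := by
    intro i
    rw [hlam]
    simp only [neg_nonneg]
    by_contra hpos
    push_neg at hpos
    set s : ℝ := (f cc - v) / f (e i) with hs
    have hsnn : 0 ≤ s := le_of_lt (div_pos (by linarith) hpos)
    have hmem : cc - s • e i ∈ D := by
      intro j
      have h1 : (cc - s • e i) j = c - s * (e i) j := rfl
      rw [h1]
      have h2 : 0 ≤ s * (e i) j := by
        refine mul_nonneg hsnn ?_
        rw [he]
        simp only [EuclideanSpace.single_apply]
        split <;> norm_num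
      linarith
    have hcalc : f (cc - s • e i) = v := by
      rw [map_sub, _root_.map_smul, smul_eq_mul, hs, div_mul_cancel₀ _ (ne_of_gt hpos)]
      ring
    have := hfv _ hmem
    rw [hcalc] at this
    exact lt_irrefl v this
  set s₀ : ℝ := ∑ i, lam i with hs₀
  have hs₀nonneg : 0 ≤ s₀ := Finset.sum_nonneg fun i _ => hlam_nonneg i
  have hs₀pos : 0 < s₀ := by
    rcases hs₀nonneg.lt_or_eq with hlt | heq
    · exact hlt
    · exfalso
      have hall : ∀ i, lam i = 0 := by
        intro i
        exact (Finset.sum_eq_zero_iff_of_nonneg (fun i _ => hlam_nonneg i)).mp heq.symm i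
          (Finset.mem_univ i)
      have hf0 : ∀ x : EuclideanSpace ℝ {M : ι // M ∈ t}, f x = 0 := by
        intro x
        rw [hdecomp x]
        refine Finset.sum_eq_zero fun i _ => ?_
        rw [hfe, hall, neg_zero, mul_zero]
      obtain ⟨ρ₀, hρ₀⟩ := hne
      have h1 := hfu _ ⟨ρ₀, hρ₀, rfl⟩
      have h2 := hfv _ hccD
      rw [hf0] at h1
      rw [hf0] at h2
      linarith
  have hfcc_eq : f cc = -(c * s₀) := by
    rw [hdecomp cc, hs₀, Finset.mul_sum, ← Finset.sum_neg_distrib]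
    refine Finset.sum_congr rfl fun i _ => ?_
    rw [hfe]
    have h1 : (cc : EuclideanSpace ℝ {M : ι // M ∈ t}) i = c := rfl
    rw [h1]
    ring
  have hkey : ∀ ρ ∈ B, c * s₀ < ∑ i, lam i * rtr ((i.1.1 : Matrix n n ℂ) * ρ) := by
    intro ρ hρ
    have h1 := hfu _ ⟨ρ, hρ, rfl⟩
    have h3 : f (T ρ) = -∑ i, lam i * rtr (i.1.1 * ρ) := by
      rw [hdecomp, ← Finset.sum_neg_distrib]
      refine Finset.sum_congr rfl fun i _ => ?_
      rw [hfe, hTapp]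
      ring
    rw [h3] at h1
    rw [hfcc_eq] at hfcc
    linarith
  refine ⟨∑ i : {M : ι // M ∈ t}, (lam i / s₀) • (i.1.1 : Matrix n n ℂ), ⟨?_, ?_⟩, ?_⟩
  · refine Finset.sum_induction _ _ (fun a b ha hb => ha.add hb) Matrix.PosSemidef.zero ?_
    intro i _
    exact posSemidef_real_smul i.1.2.1 (div_nonneg (hlam_nonneg i) hs₀nonneg)
  · rw [Finset.sum_mul, rtr_sum]
    have hterm : ∀ i : {M : ι // M ∈ t},
        rtr (((lam i / s₀) • (i.1.1 : Matrix n n ℂ)) * σ) = (lam i / s₀) * rtr (i.1.1 * σ) := by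
      intro i
      rw [Matrix.smul_mul, rtr_real_smul]
    calc ∑ i : {M : ι // M ∈ t}, rtr (((lam i / s₀) • (i.1.1 : Matrix n n ℂ)) * σ)
        = ∑ i : {M : ι // M ∈ t}, (lam i / s₀) * rtr (i.1.1 * σ) :=
          Finset.sum_congr rfl fun i _ => hterm i
      _ ≤ ∑ i : {M : ι // M ∈ t}, (lam i / s₀) * 1 :=
          Finset.sum_le_sum fun i _ =>
            mul_le_mul_of_nonneg_left i.1.2.2 (div_nonneg (hlam_nonneg i) hs₀nonneg)
      _ = 1 := by
          simp only [mul_one]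
          rw [← Finset.sum_div, ← hs₀, div_self (ne_of_gt hs₀pos)]
  · intro ρ hρ
    rw [Finset.sum_mul, rtr_sum]
    have hterm : ∀ i : {M : ι // M ∈ t},
        rtr (((lam i / s₀) • (i.1.1 : Matrix n n ℂ)) * ρ) = (lam i / s₀) * rtr (i.1.1 * ρ) := by
      intro i
      rw [Matrix.smul_mul, rtr_real_smul]
    have heq : ∑ i : {M : ι // M ∈ t}, rtr (((lam i / s₀) • (i.1.1 : Matrix n n ℂ)) * ρ)
        = (∑ i : {M : ι // M ∈ t}, lam i * rtr (i.1.1 * ρ)) / s₀ := by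
      rw [Finset.sum_div]
      refine Finset.sum_congr rfl fun i _ => ?_
      rw [hterm i]
      ring
    rw [heq, lt_div_iff₀ hs₀pos]
    exact hkey ρ hρ

end MinimaxAux

/-- Minimax interchange for smoothing over a nonempty compact convex
set `B` of sub-normalized states, with the traces regarded in `[0,∞]`. -/
theorem minimax_smoothing
    {n : Type*} [Fintype n] [DecidableEq n] [Nonempty n]
    (σ : Matrix n n ℂ) (hσ : σ.PosSemidef)
    (B : Set (Matrix n n ℂ)) (hne : B.Nonempty) (hcomp : IsCompact B) (hconv : Convex ℝ B)
    (hB : ∀ ρ' ∈ B, ρ'.PosSemidef ∧ rtr ρ' ≤ 1) :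
    (⨅ ρ' ∈ B, ⨆ M : Matrix n n ℂ, ⨆ _ : M.PosSemidef ∧ rtr (M * σ) ≤ 1,
        ENNReal.ofReal (rtr (M * ρ')))
      = ⨆ M : Matrix n n ℂ, ⨆ _ : M.PosSemidef ∧ rtr (M * σ) ≤ 1,
          ⨅ ρ' ∈ B, ENNReal.ofReal (rtr (M * ρ')) := by
  classical
  refine le_antisymm ?_ ?_
  · -- hard direction, by contradiction
    by_contra hcon
    rw [not_le] at hcon
    obtain ⟨r, hr1, hr2⟩ := exists_between hcon
    have hrne : r ≠ ⊤ := hr2.ne_top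
    set c : ℝ := r.toReal with hc
    have hofc : ENNReal.ofReal c = r := ENNReal.ofReal_toReal hrne
    have hhyp : ∀ ρ ∈ B, ∃ M : Matrix n n ℂ, (M.PosSemidef ∧ rtr (M * σ) ≤ 1) ∧
        c < rtr (M * ρ) := by
      intro ρ hρ
      have h1 : r < ⨆ M : Matrix n n ℂ, ⨆ _ : M.PosSemidef ∧ rtr (M * σ) ≤ 1,
          ENNReal.ofReal (rtr (M * ρ)) :=
        lt_of_lt_of_le hr2 (iInf₂_le ρ hρ)
      rw [lt_iSup_iff] at h1
      obtain ⟨M, hM⟩ := h1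
      rw [lt_iSup_iff] at hM
      obtain ⟨hMp, hM⟩ := hM
      refine ⟨M, hMp, ?_⟩
      by_contra hle
      push_neg at hle
      have h2 := (ENNReal.ofReal_le_ofReal hle).trans_eq hofc
      exact absurd (lt_of_lt_of_le hM h2) (lt_irrefl r)
    obtain ⟨M, hMp, hMlt⟩ := exists_uniform_M σ B hne hcomp hconv c hhyp
    have hfinal : r ≤ ⨅ ρ' ∈ B, ENNReal.ofReal (rtr (M * ρ')) := by
      refine le_iInf fun ρ => le_iInf fun hρ => ?_
      rw [← hofc]
      exact ENNReal.ofReal_le_ofReal (hMlt ρ hρ).le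
    have hle : r ≤ ⨆ M : Matrix n n ℂ, ⨆ _ : M.PosSemidef ∧ rtr (M * σ) ≤ 1,
        ⨅ ρ' ∈ B, ENNReal.ofReal (rtr (M * ρ')) :=
      hfinal.trans (le_iSup_of_le M (le_iSup_of_le hMp le_rfl))
    exact absurd (lt_of_lt_of_le hr1 hle) (lt_irrefl _)
  · refine le_iInf fun ρ => le_iInf fun hρ => iSup_le fun M => iSup_le fun hM => ?_
    exact (iInf₂_le ρ hρ).trans (le_iSup₂_of_le M hM le_rfl)
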